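/- Let A ∈ M₂(ℂ) be Hermitian and B ∈ M₂(ℂ) be Hermitian positive definite with B₁₁ = B₂₂ = 1. Then |B₁₂| < 1, and, with t := √(1 − |B₁₂|²), there exist angles φ, ψ ∈ [0, π/2) and α, β ∈ ℝ such that the matrix Z := (1/t)·[[cos φ, e^{iα} sin φ], [−e^{−iβ} sin ψ, cos ψ]] satisfies Zᴴ B Z = I₂ and Zᴴ A Z is a diagonal matrix. -/

import Mathlib

open scoped ComplexOrder
open Matrix

private lemma aux_exists_W (A B C : Matrix (Fin 2) (Fin 2) ℂ)
    (hA : A.IsHermitian) (hC : Cᴴ * B * C = 1) :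
    ∃ W : Matrix (Fin 2) (Fin 2) ℂ, Wᴴ * B * W = 1 ∧ (Wᴴ * A * W).IsDiag := by
  have hM : (Cᴴ * A * C).IsHermitian := isHermitian_conjTranspose_mul_mul C hA
  set U : Matrix (Fin 2) (Fin 2) ℂ := (hM.eigenvectorUnitary : Matrix (Fin 2) (Fin 2) ℂ) with hUdef
  have hU1 : Uᴴ * U = 1 := by
    have := Matrix.mem_unitaryGroup_iff'.mp hM.eigenvectorUnitary.2
    simpa [Matrix.star_eq_conjTranspose] using this
  refine ⟨C * U, ?_, ?_⟩
  · rw [conjTranspose_mul,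
      show Uᴴ * Cᴴ * B * (C * U) = Uᴴ * (Cᴴ * B * C) * U from by simp only [Matrix.mul_assoc],
      hC, Matrix.mul_one, hU1]
  · have hs := hM.spectral_theorem
    have hE : (C * U)ᴴ * A * (C * U) = diagonal (RCLike.ofReal ∘ hM.eigenvalues) := by
      rw [conjTranspose_mul,
        show Uᴴ * Cᴴ * A * (C * U) = Uᴴ * (Cᴴ * A * C) * U from by simp only [Matrix.mul_assoc],
        ]
      conv_lhs => rw [hs]
      rw [Unitary.conjStarAlgAut_apply, Matrix.star_eq_conjTranspose, ← hUdef,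
        show Uᴴ * (U * diagonal (RCLike.ofReal ∘ hM.eigenvalues) * Uᴴ) * U
          = (Uᴴ * U) * diagonal (RCLike.ofReal ∘ hM.eigenvalues) * (Uᴴ * U) from by
            simp only [Matrix.mul_assoc], hU1, Matrix.one_mul, Matrix.mul_one]
    rw [hE]
    exact isDiag_diagonal _

private lemma aux_exists_V (A B : Matrix (Fin 2) (Fin 2) ℂ)
    (W : Matrix (Fin 2) (Fin 2) ℂ) (h1 : Wᴴ * B * W = 1) (h2 : (Wᴴ * A * W).IsDiag) :
    ∃ V : Matrix (Fin 2) (Fin 2) ℂ, Vᴴ * B * V = 1 ∧ (Vᴴ * A * V).IsDiag ∧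
      V 0 0 ≠ 0 ∧ V 1 1 ≠ 0 := by
  by_cases hgood : W 0 0 ≠ 0 ∧ W 1 1 ≠ 0
  · exact ⟨W, h1, h2, hgood.1, hgood.2⟩
  have hdet : W.det ≠ 0 := by
    have h := congrArg Matrix.det h1
    rw [Matrix.det_mul, Matrix.det_mul, Matrix.det_one] at h
    intro h0; rw [h0, mul_zero] at h; exact zero_ne_one h
  have hprod : W 0 0 * W 1 1 = 0 := by
    rcases not_and_or.mp hgood with h | h
    · rw [not_not.mp h, zero_mul]
    · rw [not_not.mp h, mul_zero]
  have hoff : W 0 1 ≠ 0 ∧ W 1 0 ≠ 0 := by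
    rw [← mul_ne_zero_iff]
    intro h
    apply hdet
    rw [Matrix.det_fin_two, hprod, h, sub_zero]
  set P : Matrix (Fin 2) (Fin 2) ℂ := !![0,1;1,0] with hPdef
  have hP : Pᴴ = P := by
    ext i j; fin_cases i <;> fin_cases j <;> simp [hPdef]
  have hPP : P * P = 1 := by
    ext i j; fin_cases i <;> fin_cases j <;>
      simp [hPdef, Matrix.mul_apply, Fin.sum_univ_two, Matrix.one_apply]
  have hWP : ∀ i j, (W * P) i j = W i (Equiv.swap 0 1 j) := by
    intro i j
    fin_cases j <;> simp [hPdef, Matrix.mul_apply, Fin.sum_univ_two]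
  refine ⟨W * P, ?_, ?_, ?_, ?_⟩
  · rw [conjTranspose_mul, hP,
      show P * Wᴴ * B * (W * P) = P * (Wᴴ * B * W) * P from by simp only [Matrix.mul_assoc],
      h1, Matrix.mul_one, hPP]
  · have hE : (W * P)ᴴ * A * (W * P) = P * (Wᴴ * A * W) * P := by
      rw [conjTranspose_mul, hP]; simp only [Matrix.mul_assoc]
    rw [hE]
    have hD : ∀ (D : Matrix (Fin 2) (Fin 2) ℂ) i j, (P * D * P) i j
        = D (Equiv.swap 0 1 i) (Equiv.swap 0 1 j) := by
      intro D i j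
      fin_cases i <;> fin_cases j <;>
        simp [hPdef, Matrix.mul_apply, Matrix.vecMul, dotProduct,
          Fin.sum_univ_two, Equiv.swap_apply_left, Equiv.swap_apply_right]
    intro i j hij
    rw [hD]
    exact h2 ((Equiv.injective _).ne hij)
  · rw [hWP]; simpa using hoff.1
  · rw [hWP]; simpa using hoff.2

private lemma aux_exists_Z (A B : Matrix (Fin 2) (Fin 2) ℂ)
    (V : Matrix (Fin 2) (Fin 2) ℂ) (h1 : Vᴴ * B * V = 1) (h2 : (Vᴴ * A * V).IsDiag)
    (h00 : V 0 0 ≠ 0) (h11 : V 1 1 ≠ 0) :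
    ∃ Z : Matrix (Fin 2) (Fin 2) ℂ, Zᴴ * B * Z = 1 ∧ (Zᴴ * A * Z).IsDiag ∧
      Z 0 0 = (‖Z 0 0‖ : ℂ) ∧ Z 1 1 = (‖Z 1 1‖ : ℂ) ∧
      Z 0 0 ≠ 0 ∧ Z 1 1 ≠ 0 := by
  set u : Fin 2 → ℂ := fun j => (‖V j j‖ : ℂ) / V j j with hudef
  have hVjj : ∀ j, V j j ≠ 0 := by intro j; fin_cases j <;> assumption
  have habs : ∀ j, (‖V j j‖ : ℂ) ≠ 0 := fun j =>
    Complex.ofReal_ne_zero.mpr (norm_ne_zero_iff.mpr (hVjj j))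
  have hu : ∀ j, star (u j) * u j = 1 := by
    intro j
    simp only [hudef, Complex.star_def, map_div₀, Complex.conj_ofReal]
    rw [div_mul_div_comm]
    have hnum : (‖V j j‖ : ℂ) * (‖V j j‖ : ℂ)
        = (starRingEnd ℂ) (V j j) * V j j := by
      have hh : ‖V j j‖ * ‖V j j‖ = Complex.normSq (V j j) := by
        rw [Complex.normSq_eq_norm_sq]; ring
      rw [← Complex.ofReal_mul, hh, ← Complex.mul_conj]
      exact mul_comm _ _
    rw [hnum]
    exact div_self (by
      intro h
      rcases mul_eq_zero.mp h with h' | h'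
      · exact hVjj j (by simpa using congrArg (starRingEnd ℂ) h')
      · exact hVjj j h')
  have hZjj : ∀ j, (V * diagonal u) j j = (‖V j j‖ : ℂ) := by
    intro j
    rw [Matrix.mul_diagonal, hudef]
    field_simp
    exact mul_div_cancel_left₀ _ (hVjj j)
  refine ⟨V * diagonal u, ?_, ?_, ?_, ?_, ?_, ?_⟩
  · rw [conjTranspose_mul, diagonal_conjTranspose,
      show diagonal (star u) * Vᴴ * B * (V * diagonal u)
        = diagonal (star u) * (Vᴴ * B * V) * diagonal u from by simp only [Matrix.mul_assoc],
      h1, Matrix.mul_one, diagonal_mul_diagonal, ← Matrix.diagonal_one]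
    exact congrArg diagonal (funext hu)
  · have hE : (V * diagonal u)ᴴ * A * (V * diagonal u)
        = diagonal (star u) * (Vᴴ * A * V) * diagonal u := by
      rw [conjTranspose_mul, diagonal_conjTranspose]; simp only [Matrix.mul_assoc]
    rw [hE]
    intro i j hij
    rw [Matrix.mul_diagonal, Matrix.diagonal_mul, h2 hij, mul_zero, zero_mul]
  · rw [hZjj 0, Complex.norm_real, norm_norm]
  · rw [hZjj 1, Complex.norm_real, norm_norm]
  · rw [hZjj 0]; exact habs 0
  · rw [hZjj 1]; exact habs 1

set_option maxHeartbeats 2000000 in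
theorem stmt_0 (A B : Matrix (Fin 2) (Fin 2) ℂ)
    (hA : A.IsHermitian) (hB : B.PosDef)
    (hB11 : B 0 0 = 1) (hB22 : B 1 1 = 1) :
    ‖B 0 1‖ < 1 ∧
    ∃ φ ψ α β : ℝ,
      0 ≤ φ ∧ φ < Real.pi / 2 ∧ 0 ≤ ψ ∧ ψ < Real.pi / 2 ∧
      (fun (Z : Matrix (Fin 2) (Fin 2) ℂ) =>
          Zᴴ * B * Z = 1 ∧ (Zᴴ * A * Z).IsDiag)
        (((1 / Real.sqrt (1 - ‖B 0 1‖ ^ 2) : ℝ) : ℂ) •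
          !![(Real.cos φ : ℂ), Complex.exp (Complex.I * (α : ℂ)) * (Real.sin φ : ℂ);
             -(Complex.exp (-(Complex.I * (β : ℂ))) * (Real.sin ψ : ℂ)), (Real.cos ψ : ℂ)]) := by
  have hb10 : B 1 0 = (starRingEnd ℂ) (B 0 1) := by
    conv_lhs => rw [← hB.1]
    simp [Matrix.conjTranspose_apply]
  -- det
  have hdet : (0:ℂ) < B.det := hB.det_pos
  have hdet2 : B.det = ((1 - Complex.normSq (B 0 1) : ℝ) : ℂ) := by
    rw [Matrix.det_fin_two, hB11, hB22, hb10]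
    push_cast
    rw [← Complex.mul_conj]
    ring
  have hn1 : Complex.normSq (B 0 1) < 1 := by
    rw [hdet2] at hdet
    have := (Complex.zero_lt_real).mp hdet
    linarith
  have habs1 : ‖B 0 1‖ < 1 := by
    have h1 := Complex.sq_norm (B 0 1)
    have h2 := norm_nonneg (B 0 1)
    nlinarith
  set t : ℝ := Real.sqrt (1 - ‖B 0 1‖ ^ 2) with htdef
  have ht0 : 0 < 1 - ‖B 0 1‖ ^ 2 := by
    have h2 := norm_nonneg (B 0 1)
    nlinarith
  have htpos : 0 < t := Real.sqrt_pos.mpr ht0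
  have ht2 : t ^ 2 = 1 - ‖B 0 1‖ ^ 2 := Real.sq_sqrt ht0.le
  have htc : (t:ℂ) * (t:ℂ) = 1 - (starRingEnd ℂ) (B 0 1) * (B 0 1) := by
    have h3 : ((t ^ 2 : ℝ) : ℂ) = ((1 - Complex.normSq (B 0 1) : ℝ) : ℂ) := by
      rw [ht2, Complex.sq_norm]
    push_cast at h3
    rw [← Complex.normSq_eq_conj_mul_self]
    push_cast
    linear_combination h3
  have htcne : (t:ℂ) ≠ 0 := Complex.ofReal_ne_zero.mpr htpos.ne'
  set C : Matrix (Fin 2) (Fin 2) ℂ := !![1, -(B 0 1 / (t:ℂ)); 0, 1/(t:ℂ)] with hCdef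
  have hC : Cᴴ * B * C = 1 := by
    ext i j
    fin_cases i <;> fin_cases j <;>
      simp [hCdef, Matrix.mul_apply, Fin.sum_univ_two, Matrix.conjTranspose_apply,
        Matrix.one_apply, hB11, hB22, hb10] <;>
      field_simp <;>
      first
      | ring1
      | linear_combination htc
      | linear_combination (-1 - (t:ℂ)) * htc
      | linear_combination ((t:ℂ) + 1) * htc
      | linear_combination (t:ℂ) * htc
      | linear_combination -(t:ℂ) * htc
      | linear_combination -htc
  obtain ⟨W, hW1, hW2⟩ := aux_exists_W A B C hA hC
  obtain ⟨V, hV1, hV2, hV00, hV11⟩ := aux_exists_V A B W hW1 hW2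
  obtain ⟨Z, hZ1, hZ2, hZ00, hZ11, hZ00ne, hZ11ne⟩ := aux_exists_Z A B V hV1 hV2 hV00 hV11
  have hZB : Z * Zᴴ * B = 1 := by
    rw [Matrix.mul_assoc]
    exact mul_eq_one_comm.mp hZ1
  have key : ∀ k l, (Z * Zᴴ * B) k l = (1 : Matrix (Fin 2) (Fin 2) ℂ) k l := fun k l => by
    rw [hZB]
  have e00 := key 0 0
  have e01 := key 0 1
  have e10 := key 1 0
  have e11 := key 1 1
  simp only [Matrix.mul_apply, Fin.sum_univ_two, Matrix.conjTranspose_apply,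
    Matrix.one_apply, hB11, hB22, hb10, Complex.star_def] at e00 e01 e10 e11
  norm_num at e00 e01 e10 e11
  set x0 := ‖Z 0 0‖ with hx0def
  set x1 := ‖Z 1 1‖ with hx1def
  have hx0 : 0 < x0 := norm_pos_iff.mpr hZ00ne
  have hx1 : 0 < x1 := norm_pos_iff.mpr hZ11ne
  have hg00c : (Z 0 0 * (starRingEnd ℂ) (Z 0 0) + Z 0 1 * (starRingEnd ℂ) (Z 0 1))
      * ((t:ℂ) * (t:ℂ)) = 1 := by
    linear_combination e00 - (starRingEnd ℂ) (B 0 1) * e01 +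
      (Z 0 0 * (starRingEnd ℂ) (Z 0 0) + Z 0 1 * (starRingEnd ℂ) (Z 0 1)) * htc
  have hg11c : (Z 1 0 * (starRingEnd ℂ) (Z 1 0) + Z 1 1 * (starRingEnd ℂ) (Z 1 1))
      * ((t:ℂ) * (t:ℂ)) = 1 := by
    linear_combination e11 - (B 0 1) * e10 +
      (Z 1 0 * (starRingEnd ℂ) (Z 1 0) + Z 1 1 * (starRingEnd ℂ) (Z 1 1)) * htc
  rw [hZ00, Complex.conj_ofReal, Complex.mul_conj] at hg00c
  rw [hZ11, Complex.conj_ofReal, Complex.mul_conj] at hg11c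
  have hr00 : (x0 * x0 + Complex.normSq (Z 0 1)) * (t * t) = 1 := by exact_mod_cast hg00c
  have hr11 : (Complex.normSq (Z 1 0) + x1 * x1) * (t * t) = 1 := by exact_mod_cast hg11c
  -- angles
  have hle0 : t * x0 ≤ 1 := by
    nlinarith [Complex.normSq_nonneg (Z 0 1), mul_pos htpos hx0]
  have hle1 : t * x1 ≤ 1 := by
    nlinarith [Complex.normSq_nonneg (Z 1 0), mul_pos htpos hx1]
  have hcosφ : Real.cos (Real.arccos (t * x0)) = t * x0 :=
    Real.cos_arccos (by nlinarith [mul_pos htpos hx0]) hle0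
  have hcosψ : Real.cos (Real.arccos (t * x1)) = t * x1 :=
    Real.cos_arccos (by nlinarith [mul_pos htpos hx1]) hle1
  have hsinφ : Real.sin (Real.arccos (t * x0)) = t * ‖Z 0 1‖ := by
    rw [Real.sin_arccos,
      show 1 - (t * x0) ^ 2 = (t * ‖Z 0 1‖) ^ 2 from by
        nlinarith [Complex.sq_norm (Z 0 1)]]
    exact Real.sqrt_sq (by positivity)
  have hsinψ : Real.sin (Real.arccos (t * x1)) = t * ‖Z 1 0‖ := by
    rw [Real.sin_arccos,
      show 1 - (t * x1) ^ 2 = (t * ‖Z 1 0‖) ^ 2 from by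
        nlinarith [Complex.sq_norm (Z 1 0)]]
    exact Real.sqrt_sq (by positivity)
  refine ⟨habs1, Real.arccos (t * x0), Real.arccos (t * x1),
    Complex.arg (Z 0 1), -Complex.arg (-(Z 1 0)),
    Real.arccos_nonneg _, Real.arccos_lt_pi_div_two.mpr (by positivity),
    Real.arccos_nonneg _, Real.arccos_lt_pi_div_two.mpr (by positivity), ?_⟩
  have hmat : (((1 / t : ℝ) : ℂ) •
      !![(Real.cos (Real.arccos (t * x0)) : ℂ),
          Complex.exp (Complex.I * ((Complex.arg (Z 0 1) : ℝ) : ℂ))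
            * (Real.sin (Real.arccos (t * x0)) : ℂ);
          -(Complex.exp (-(Complex.I * ((-Complex.arg (-(Z 1 0)) : ℝ) : ℂ)))
            * (Real.sin (Real.arccos (t * x1)) : ℂ)),
          (Real.cos (Real.arccos (t * x1)) : ℂ)]) = Z := by
    ext i j
    fin_cases i <;> fin_cases j <;> simp only [Fin.zero_eta, Fin.mk_one, Fin.isValue,
      Matrix.smul_apply, Matrix.cons_val', Matrix.cons_val_zero,
      Matrix.cons_val_one, Matrix.head_cons, Matrix.head_fin_const, Matrix.empty_val',
      Matrix.cons_val_fin_one, Matrix.of_apply, smul_eq_mul]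
    · rw [hcosφ, hZ00]
      push_cast
      field_simp
    · rw [hsinφ]
      push_cast
      rw [mul_comm Complex.I ((Complex.arg (Z 0 1) : ℝ) : ℂ)]
      field_simp
      linear_combination Complex.norm_mul_exp_arg_mul_I (Z 0 1)
    · rw [hsinψ,
        show -(Complex.I * ((-Complex.arg (-(Z 1 0)) : ℝ) : ℂ))
          = ((Complex.arg (-(Z 1 0)) : ℝ) : ℂ) * Complex.I from by push_cast; ring,
        show ‖Z 1 0‖ = ‖-(Z 1 0)‖ from by rw [norm_neg]]
      conv_rhs => rw [show Z 1 0 = -(-(Z 1 0)) from (neg_neg _).symm,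
        ← Complex.norm_mul_exp_arg_mul_I (-(Z 1 0))]
      push_cast
      field_simp
    · rw [hcosψ, hZ11]
      push_cast
      field_simp
  rw [show (1 / Real.sqrt (1 - ‖B 0 1‖ ^ 2) : ℝ) = 1 / t from by rw [htdef]]
  show _ ∧ _
  rw [hmat]
  exact ⟨hZ1, hZ2⟩
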